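/- For any r = (r₁,r₂) with r₁, r₂ > 0, let (y₀,p₀) ∈ U be the unique solution of a_r((y₀,p₀),(ȳ,p̄)) = l(ȳ,p̄) for all (ȳ,p̄) ∈ U, and define J_r⋆⋆(λ,μ) := ½∫∫_{Q_T} T_r(λ,μ)·(λ,μ) dxdt − b((y₀,p₀),(λ,μ)). Then sup over (λ,μ) ∈ X of inf over (y,p) ∈ U of 𝓛_r((y,p),(λ,μ)) equals −inf over (λ,μ) ∈ X of J_r⋆⋆(λ,μ) plus 𝓛_r((y₀,p₀),(0,0)), where 𝓛_r((y,p),(λ,μ)) := ½a_r((y,p),(y,p)) + b((y,p),(λ,μ)) − l(y,p). -/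
import Mathlib


open scoped RealInnerProductSpace

/-!
Abstract formalization of Proposition 3.5 of Cîndea–Münch (dual formulation
of the first-order extremal problem).

Setting (see Statements 9 and 16): `U` is the completion of `U₀` for
`‖(y,p)‖²_U = ‖ρ₀⁻¹y‖²_{L²(q_T)} + η₁‖ρ₁⁻¹J(y,p)‖² + η₂‖ρ⁻¹I(y,p)‖²`;
`X = L²(Q_T) × L²(Q_T)^N = HQ × VQ`;
`obsU u = ρ₀⁻¹y|_{q_T}`, `Jm u = ρ₁⁻¹J(y,p)`, `Im u = ρ⁻¹I(y,p)`,
`g = ρ₀⁻¹y_obs`; `a(u,ub) = ⟪obsU u,obsU ub⟫`,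
`b(u,(λ,μ)) = ⟪Jm u, μ⟫ + ⟪Im u, λ⟫`, `l(u) = ⟪obsU u, g⟫`,
`a_r(u,ub) = a(u,ub) + r₁⟪Jm u,Jm ub⟫ + r₂⟪Im u,Im ub⟫`,
`𝓛_r(u,(λ,μ)) = ½a_r(u,u) + b(u,(λ,μ)) − l(u)`.
`T = T_r` is the operator of Lemma 3.1 (hypothesis `hT`), `(y₀,p₀)` solves
`a_r((y₀,p₀),(yb,pb)) = l(yb,pb)` for all `(yb,pb) ∈ U` (hypothesis `hu₀`),
and `J_r⋆⋆(λ,μ) = ½∫∫ T_r(λ,μ)·(λ,μ) − b((y₀,p₀),(λ,μ))`.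

Statement:
`sup_{(λ,μ) ∈ X} inf_{(y,p) ∈ U} 𝓛_r((y,p),(λ,μ))
 = − inf_{(λ,μ) ∈ X} J_r⋆⋆(λ,μ) + 𝓛_r((y₀,p₀),(0,0))`.
-/
theorem firstOrder_dual_formulation_eq
    {U HQ VQ Hq : Type*}
    [NormedAddCommGroup U] [InnerProductSpace ℝ U] [CompleteSpace U]
    [NormedAddCommGroup HQ] [InnerProductSpace ℝ HQ] [CompleteSpace HQ]
    [NormedAddCommGroup VQ] [InnerProductSpace ℝ VQ] [CompleteSpace VQ]
    [NormedAddCommGroup Hq] [InnerProductSpace ℝ Hq] [CompleteSpace Hq]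
    (obsU : U →L[ℝ] Hq) (Jm : U →L[ℝ] VQ) (Im : U →L[ℝ] HQ)
    (η₁ η₂ : ℝ) (hη₁ : 0 < η₁) (hη₂ : 0 < η₂)
    (hnormU : ∀ u : U,
      ‖u‖ ^ 2 = ‖obsU u‖ ^ 2 + η₁ * ‖Jm u‖ ^ 2 + η₂ * ‖Im u‖ ^ 2)
    (g : Hq) (r₁ r₂ : ℝ) (hr₁ : 0 < r₁) (hr₂ : 0 < r₂)
    (T : HQ × VQ → HQ × VQ)
    (hT : ∀ (lam : HQ) (mu : VQ), ∃ u : U,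
      (∀ ub : U,
        ⟪obsU u, obsU ub⟫ + r₁ * ⟪Jm u, Jm ub⟫ + r₂ * ⟪Im u, Im ub⟫ =
          ⟪Jm ub, mu⟫ + ⟪Im ub, lam⟫) ∧
      T (lam, mu) = (Im u, Jm u))
    (u₀ : U)
    (hu₀ : ∀ ub : U,
      ⟪obsU u₀, obsU ub⟫ + r₁ * ⟪Jm u₀, Jm ub⟫ + r₂ * ⟪Im u₀, Im ub⟫ =
        ⟪obsU ub, g⟫) :
    (⨆ q : HQ × VQ, ⨅ u : U,
        ((1 / 2) * (⟪obsU u, obsU u⟫ + r₁ * ⟪Jm u, Jm u⟫ +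
            r₂ * ⟪Im u, Im u⟫) +
          (⟪Jm u, q.2⟫ + ⟪Im u, q.1⟫) - ⟪obsU u, g⟫)) =
      -(⨅ q : HQ × VQ,
          ((1 / 2) * (⟪(T q).1, q.1⟫ + ⟪(T q).2, q.2⟫) -
            (⟪Jm u₀, q.2⟫ + ⟪Im u₀, q.1⟫))) +
        ((1 / 2) * (⟪obsU u₀, obsU u₀⟫ + r₁ * ⟪Jm u₀, Jm u₀⟫ +
            r₂ * ⟪Im u₀, Im u₀⟫) - ⟪obsU u₀, g⟫) := by
  classical
  obtain ⟨A, hA⟩ : ∃ A : U → U → ℝ, A = fun u v =>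
      ⟪obsU u, obsU v⟫ + r₁ * ⟪Jm u, Jm v⟫ + r₂ * ⟪Im u, Im v⟫ := ⟨_, rfl⟩
  have Asymm : ∀ u v : U, A u v = A v u := by
    intro u v; simp [hA, real_inner_comm]
  have Aadd : ∀ u v w : U, A (u + v) w = A u w + A v w := by
    intro u v w; simp [hA, map_add, inner_add_left]; ring
  have Aaddr : ∀ u v w : U, A u (v + w) = A u v + A u w := by
    intro u v w; simp [hA, map_add, inner_add_right]; ring
  have Asub : ∀ u v w : U, A (u - v) w = A u w - A v w := by
    intro u v w; simp [hA, map_sub, inner_sub_left]; ring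
  have Asubr : ∀ u v w : U, A u (v - w) = A u v - A u w := by
    intro u v w; simp [hA, map_sub, inner_sub_right]; ring
  have Anegl : ∀ u v : U, A (-u) v = -A u v := by
    intro u v; simp [hA, map_neg, inner_neg_left]; ring
  have Anegr : ∀ u v : U, A u (-v) = -A u v := by
    intro u v; simp [hA, map_neg, inner_neg_right]; ring
  have Apos : ∀ u : U, 0 ≤ A u u := by
    intro u
    have h1 : (0:ℝ) ≤ ⟪obsU u, obsU u⟫ := real_inner_self_nonneg
    have h2 : (0:ℝ) ≤ ⟪Jm u, Jm u⟫ := real_inner_self_nonneg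
    have h3 : (0:ℝ) ≤ ⟪Im u, Im u⟫ := real_inner_self_nonneg
    have := mul_nonneg hr₁.le h2
    have := mul_nonneg hr₂.le h3
    rw [hA]; dsimp only; linarith
  -- the solution of the variational problem for each q
  have keyChoice : ∀ q : HQ × VQ, ∃ u : U,
      (∀ ub : U, A u ub = ⟪Jm ub, q.2⟫ + ⟪Im ub, q.1⟫) ∧
      T q = (Im u, Jm u) := by
    intro q
    obtain ⟨u, hu, hTu⟩ := hT q.1 q.2
    refine ⟨u, fun ub => ?_, hTu⟩
    rw [hA]; exact hu ub
  choose u1 h1 h2 using keyChoice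
  have hl : ∀ u : U, ⟪obsU u, g⟫ = A u₀ u := by
    intro u; rw [hA]; exact (hu₀ u).symm
  obtain ⟨w, hw⟩ : ∃ w : HQ × VQ → U, w = fun q => u1 q - u₀ := ⟨_, rfl⟩
  -- rewrite the inner objective
  have hE : ∀ (q : HQ × VQ) (u : U),
      ((1 / 2) * (⟪obsU u, obsU u⟫ + r₁ * ⟪Jm u, Jm u⟫ +
          r₂ * ⟪Im u, Im u⟫) + (⟪Jm u, q.2⟫ + ⟪Im u, q.1⟫) - ⟪obsU u, g⟫)
        = (1/2) * A u u + A (w q) u := by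
    intro q u
    rw [← h1 q u, hl u]
    simp only [hw, Asub]
    rw [hA]; dsimp only; ring
  -- compute the inner infimum
  have hinf : ∀ q : HQ × VQ,
      (⨅ u : U, ((1/2) * A u u + A (w q) u)) = -(1/2) * A (w q) (w q) := by
    intro q
    have hexp : ∀ u : U, A (u + w q) (u + w q)
        = A u u + 2 * A (w q) u + A (w q) (w q) := by
      intro u
      rw [Aadd, Aaddr, Aaddr, Asymm u (w q)]; ring
    have hlow : ∀ u : U, -(1/2) * A (w q) (w q) ≤ (1/2) * A u u + A (w q) u := by
      intro u
      have := Apos (u + w q)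
      rw [hexp u] at this
      linarith
    apply le_antisymm
    · have hb : BddBelow (Set.range fun u : U => (1/2) * A u u + A (w q) u) :=
        ⟨-(1/2) * A (w q) (w q), by rintro x ⟨u, rfl⟩; exact hlow u⟩
      calc (⨅ u : U, ((1/2) * A u u + A (w q) u))
          ≤ (1/2) * A (-(w q)) (-(w q)) + A (w q) (-(w q)) := ciInf_le hb (-(w q))
        _ = -(1/2) * A (w q) (w q) := by simp only [Anegl, Anegr]; ring
    · exact le_ciInf hlow
  -- identify with J⋆⋆
  obtain ⟨Jstar, hJ⟩ : ∃ Jstar : HQ × VQ → ℝ, Jstar = fun q =>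
      ((1 / 2) * (⟪(T q).1, q.1⟫ + ⟪(T q).2, q.2⟫) -
        (⟪Jm u₀, q.2⟫ + ⟪Im u₀, q.1⟫)) := ⟨_, rfl⟩
  obtain ⟨c, hc⟩ : ∃ c : ℝ, c = (1/2) * A u₀ u₀ := ⟨_, rfl⟩
  have hJeq : ∀ q : HQ × VQ, Jstar q = (1/2) * A (u1 q) (u1 q) - A (u1 q) u₀ := by
    intro q
    rw [hJ]
    dsimp only
    rw [h2 q]
    have e1 := h1 q (u1 q)
    have e2 := h1 q u₀
    dsimp only
    linarith
  have hrel : ∀ q : HQ × VQ,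
      -(1/2) * A (w q) (w q) = -(Jstar q) - c := by
    intro q
    have hexp : A (w q) (w q)
        = A (u1 q) (u1 q) - 2 * A (u1 q) u₀ + A u₀ u₀ := by
      simp only [hw, Asub, Asubr]
      rw [Asymm u₀ (u1 q)]
      ring
    rw [hJeq q, hc, hexp]
    ring
  -- rewrite LHS inner infima
  have hL : (fun q : HQ × VQ => ⨅ u : U,
      ((1 / 2) * (⟪obsU u, obsU u⟫ + r₁ * ⟪Jm u, Jm u⟫ +
          r₂ * ⟪Im u, Im u⟫) + (⟪Jm u, q.2⟫ + ⟪Im u, q.1⟫) - ⟪obsU u, g⟫))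
      = fun q : HQ × VQ => -(Jstar q) - c := by
    funext q
    rw [show (fun u : U =>
      ((1 / 2) * (⟪obsU u, obsU u⟫ + r₁ * ⟪Jm u, Jm u⟫ +
          r₂ * ⟪Im u, Im u⟫) + (⟪Jm u, q.2⟫ + ⟪Im u, q.1⟫) - ⟪obsU u, g⟫))
      = fun u : U => (1/2) * A u u + A (w q) u from funext (hE q)]
    rw [hinf q, hrel q]
  -- the constant term on the RHS
  have hconst : ((1 / 2) * (⟪obsU u₀, obsU u₀⟫ + r₁ * ⟪Jm u₀, Jm u₀⟫ +
      r₂ * ⟪Im u₀, Im u₀⟫) - ⟪obsU u₀, g⟫) = -c := by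
    rw [hl u₀, hc, hA]
    dsimp only
    ring
  rw [hL, hconst, ← hJ]
  -- bounds
  have hJb : ∀ q : HQ × VQ, -c ≤ Jstar q := by
    intro q
    have h3 := Apos (w q)
    have h4 := hrel q
    linarith
  have hSb : ∀ q : HQ × VQ, -(Jstar q) - c ≤ 0 := by
    intro q
    have := hJb q
    linarith
  have hne : Nonempty (HQ × VQ) := ⟨(0, 0)⟩
  have hbdd : BddBelow (Set.range Jstar) :=
    ⟨-c, by rintro x ⟨q, rfl⟩; exact hJb q⟩
  have hbddA : BddAbove (Set.range fun q : HQ × VQ => -(Jstar q) - c) :=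
    ⟨0, by rintro x ⟨q, rfl⟩; exact hSb q⟩
  apply le_antisymm
  · apply ciSup_le
    intro q
    have hm : (⨅ q : HQ × VQ, Jstar q) ≤ Jstar q := ciInf_le hbdd q
    linarith
  · have hkey : ∀ q : HQ × VQ,
        -(Jstar q) - c ≤ ⨆ q : HQ × VQ, (-(Jstar q) - c) :=
      fun q => le_ciSup hbddA q
    have hm : -(⨆ q : HQ × VQ, (-(Jstar q) - c)) - c ≤ ⨅ q : HQ × VQ, Jstar q :=
      le_ciInf fun q => by have := hkey q; linarith
    linarith
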